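/- For every integer n ≥ 1, the series ∑_{k≥0} k² / [k² − (n−1/2)²]² equals π²/4. -/

import Mathlib

open Real Filter Finset Topology


-- odd Basel: ∑ 1/(2j+1)^2 = π^2/8
lemma hasSum_odd_basel : HasSum (fun j : ℕ => (1:ℝ) / ((2*j+1 : ℕ):ℝ)^2) (π^2/8) := by
  have h := hasSum_zeta_two
  have heven : HasSum (fun j : ℕ => (1:ℝ) / ((2*j : ℕ):ℝ)^2) (π^2/6/4) := by
    have h4 := h.div_const 4
    have he : (fun j : ℕ => (1:ℝ) / ((2*j:ℕ):ℝ)^2) = fun j : ℕ => (1:ℝ)/(j:ℝ)^2/4 := by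
      funext j
      rcases Nat.eq_zero_or_pos j with hj | hj
      · simp [hj]
      · have hj' : (j:ℝ) ≠ 0 := Nat.cast_ne_zero.mpr hj.ne'
        push_cast
        field_simp
        ring
    rw [he]; exact h4
  have hodd_sum : Summable (fun j : ℕ => (1:ℝ) / ((2*j+1 : ℕ):ℝ)^2) := by
    have hinj : Function.Injective (fun j : ℕ => 2*j+1) := by
      intro a b hab; simp only [] at hab; omega
    exact h.summable.comp_injective hinj
  have hcomb : HasSum (fun n : ℕ => (1:ℝ)/(n:ℝ)^2)
      (π^2/6/4 + ∑' j : ℕ, (1:ℝ) / ((2*j+1 : ℕ):ℝ)^2) :=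
    HasSum.even_add_odd heven hodd_sum.hasSum
  have := hcomb.unique h
  have hval : ∑' j : ℕ, (1:ℝ) / ((2*j+1 : ℕ):ℝ)^2 = π^2/8 := by linarith
  rw [← hval]; exact hodd_sum.hasSum

-- half-integer Basel
lemma hasSum_half : HasSum (fun j : ℕ => (1:ℝ) / ((j:ℝ) + 1/2)^2) (π^2/2) := by
  have h := hasSum_odd_basel.mul_left 4
  have he : (fun j : ℕ => 4 * ((1:ℝ) / ((2*j+1 : ℕ):ℝ)^2))
      = fun j : ℕ => (1:ℝ) / ((j:ℝ) + 1/2)^2 := by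
    funext j
    have h2 : ((j:ℝ) + 1/2) ≠ 0 := by positivity
    have h3 : (2*(j:ℝ)+1) ≠ 0 := by positivity
    push_cast
    field_simp
    ring
  rw [he] at h
  convert h using 1
  · rfl
  ring



lemma telesum : ∀ n : ℕ, 1 ≤ n →
    ∑ k ∈ Finset.range (2*n-1), (1:ℝ)/((k:ℝ) - ((n:ℝ) - 1/2)) = -(1/((n:ℝ)-1/2)) := by
  intro n
  induction n with
  | zero => intro h; omega
  | succ m ih =>
    intro _
    rcases Nat.eq_zero_or_pos m with hm | hm
    · subst hm; norm_num
    · have hstep : 2*(m+1)-1 = (2*m-1)+1+1 := by omega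
      rw [hstep, Finset.sum_range_succ', Finset.sum_range_succ]
      have he : ∑ k ∈ range (2*m-1), (1:ℝ)/(((k:ℕ)+1:ℝ) - (((m:ℕ):ℝ)+1 - 1/2))
          = ∑ k ∈ range (2*m-1), (1:ℝ)/((k:ℝ) - ((m:ℝ) - 1/2)) := by
        apply Finset.sum_congr rfl
        intro k _
        ring_nf
      have hm2 : (0:ℝ) < (m:ℝ) := by exact_mod_cast hm
      have hne1 : (m:ℝ) - 1/2 ≠ 0 := by
        intro h
        have h2 : (2*m : ℝ) = 1 := by linarith
        have : (2*m : ℕ) = 1 := by exact_mod_cast h2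
        omega
      have hne2 : (m:ℝ) + 1/2 ≠ 0 := by positivity
      have hlast : (1:ℝ)/((((2*m-1)+1 : ℕ):ℝ) - (((m:ℕ)+1:ℝ) - 1/2)) = 1/((m:ℝ)-1/2) := by
        have h1 : (2*m-1)+1 = 2*m := by omega
        rw [h1]
        push_cast
        ring_nf
      have hzero : (1:ℝ)/(((0:ℕ):ℝ) - (((m:ℕ)+1:ℝ) - 1/2)) = -(1/((m:ℝ)+1/2)) := by
        rw [show (((0:ℕ):ℝ) - (((m:ℕ)+1:ℝ) - 1/2)) = -((m:ℝ)+1/2) by push_cast; ring,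
          one_div_neg_eq_neg_one_div]
      push_cast
      push_cast at he hlast hzero ih
      rw [he, ih hm, hlast, hzero]
      ring


theorem stmt2 (n : ℕ) (hn : 1 ≤ n) :
    ∑' k : ℕ, (k : ℝ) ^ 2 / ((k : ℝ) ^ 2 - ((n : ℝ) - 1 / 2) ^ 2) ^ 2
      = π ^ 2 / 4 := by
  have hn1 : (1:ℝ) ≤ (n:ℝ) := by exact_mod_cast hn
  set a : ℝ := (n:ℝ) - 1/2 with ha
  have ha_pos : 0 < a := by rw [ha]; linarith
  have ha0 : a ≠ 0 := ha_pos.ne'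
  have hsub : ∀ k : ℕ, (k:ℝ) - a ≠ 0 := by
    intro k hk
    have h2 : ((2*k+1 : ℕ) : ℝ) = ((2*n : ℕ) : ℝ) := by push_cast; rw [ha] at hk; linarith
    have : (2*k+1 : ℕ) = 2*n := Nat.cast_injective h2
    omega
  have hadd : ∀ k : ℕ, (0:ℝ) < (k:ℝ) + a := by
    intro k
    have : (0:ℝ) ≤ (k:ℝ) := Nat.cast_nonneg k
    linarith
  have hg := hasSum_half
  set g : ℕ → ℝ := fun j => 1 / ((j:ℝ) + 1/2)^2 with hgdef
  set p : ℕ → ℝ := fun k => 1 / ((k:ℝ) - a)^2 with hpdef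
  set q : ℕ → ℝ := fun k => 1 / ((k:ℝ) + a)^2 with hqdef
  -- sum of p
  have hp : HasSum p (π^2/2 + ∑ i ∈ range n, p i) := by
    rw [← hasSum_nat_add_iff n]
    have hshift : (fun m => p (m + n)) = g := by
      funext m
      simp only [hpdef, hgdef, ha]
      push_cast
      ring_nf
    rw [hshift]
    exact hg
  -- sum of q
  have hq : HasSum q (π^2/2 - ∑ i ∈ range (n-1), g i) := by
    have h1 : HasSum (fun m => g (m + (n-1))) (π^2/2 - ∑ i ∈ range (n-1), g i) := by
      rw [hasSum_nat_add_iff (n-1), sub_add_cancel]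
      exact hg
    have hshift : (fun m => g (m + (n-1))) = q := by
      funext m
      have hc : ((m + (n-1) : ℕ) : ℝ) = (m:ℝ) + (n:ℝ) - 1 := by
        push_cast [Nat.cast_sub hn]
        ring
      simp only [hgdef, hqdef, hc, ha]
      ring_nf
    rwa [hshift] at h1
  -- the partial-sum identities
  have hApB : ∑ i ∈ range n, p i = (∑ i ∈ range (n-1), g i) + 1/a^2 := by
    have hstep1 : ∑ i ∈ range n, p i = ∑ j ∈ range n, g (n-1-j) := by
      apply Finset.sum_congr rfl
      intro i hi
      rw [Finset.mem_range] at hi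
      have hcast : ((n-1-i : ℕ):ℝ) = (n:ℝ) - 1 - (i:ℝ) := by
        have h5 : (n-1-i) + (i+1) = n := by omega
        have h6 : (((n-1-i) + (i+1) : ℕ) : ℝ) = (n:ℝ) := by rw [h5]
        push_cast at h6
        linarith
      simp only [hpdef, hgdef, hcast, ha]
      congr 1
      ring
    rw [hstep1, Finset.sum_range_reflect]
    have hsplit : n = (n-1) + 1 := by omega
    conv_lhs => rw [hsplit]
    rw [Finset.sum_range_succ]
    congr 1
    simp only [hgdef, ha]
    have hcast : ((n-1:ℕ):ℝ) = (n:ℝ)-1 := by push_cast [Nat.cast_sub hn]; ring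
    rw [hcast]
    ring_nf
  -- u, telescoping part
  set f : ℕ → ℝ := fun k => 1/((k:ℝ) - a) with hfdef
  set m : ℕ := 2*n - 1 with hmdef
  have hmcast : ((m:ℕ):ℝ) = 2*(n:ℝ) - 1 := by
    rw [hmdef]
    have h1 : (1:ℕ) ≤ 2*n := by omega
    push_cast [Nat.cast_sub h1]
    ring
  set u : ℕ → ℝ := fun k => f k - f (k + m) with hudef
  have hu_eq : ∀ k : ℕ, u k = 1/((k:ℝ)-a) - 1/((k:ℝ)+a) := by
    intro k
    simp only [hudef, hfdef]
    congr 2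
    push_cast [hmcast]
    rw [ha]
    ring
  have husum : Summable u := by
    rw [← summable_nat_add_iff n]
    have key : ∀ k : ℕ, ((k+n:ℕ):ℝ) - a = (k:ℝ) + 1/2 := by
      intro k; push_cast; rw [ha]; ring
    have key2 : ∀ k : ℕ, ((k+n:ℕ):ℝ) + a = ((k:ℝ) + 1/2) + (2*(n:ℝ) - 1) := by
      intro k; push_cast; rw [ha]; ring
    have hx : ∀ k : ℕ, (0:ℝ) < (k:ℝ) + 1/2 := by intro k; positivity
    have hn2 : (0:ℝ) < 2*(n:ℝ) - 1 := by linarith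
    apply Summable.of_nonneg_of_le (f := fun k => (2*(n:ℝ)) * g k)
    · intro k
      rw [hu_eq]
      rw [key, key2]
      have h1 : (0:ℝ) < (k:ℝ) + 1/2 + (2*(n:ℝ)-1) := by linarith [hx k]
      have := one_div_le_one_div_of_le (hx k) (by linarith : (k:ℝ) + 1/2 ≤ (k:ℝ) + 1/2 + (2*(n:ℝ)-1))
      linarith
    · intro k
      rw [hu_eq, key, key2]
      simp only [hgdef]
      set x : ℝ := (k:ℝ) + 1/2 with hxdef
      have hx0 : (0:ℝ) < x := hx k
      have hy0 : (0:ℝ) < x + (2*(n:ℝ)-1) := by linarith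
      rw [div_sub_div _ _ hx0.ne' hy0.ne', mul_one_div]
      apply div_le_div₀ (by linarith : (0:ℝ) ≤ 2*(n:ℝ)) (by linarith) (by positivity)
      nlinarith
    · exact hg.summable.mul_left _
  have hpartial : ∀ N, ∑ k ∈ range N, u k
      = (∑ k ∈ range m, f k) - ∑ i ∈ range m, f (N + i) := by
    intro N
    have h1 := Finset.sum_range_add f N m
    have h2 := Finset.sum_range_add f m N
    rw [Nat.add_comm m N] at h2
    have h4 : ∑ k ∈ range N, u k = ∑ k ∈ range N, f k - ∑ k ∈ range N, f (k + m) := by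
      simp only [hudef]
      rw [Finset.sum_sub_distrib]
    have h5 : ∑ k ∈ range N, f (k + m) = ∑ k ∈ range N, f (m + k) := by
      apply Finset.sum_congr rfl; intro x _; rw [Nat.add_comm]
    rw [h4, h5]
    linarith [h1, h2]
  have hlim0 : Tendsto (fun N : ℕ => ∑ i ∈ range m, f (N + i)) atTop (𝓝 0) := by
    have hterm : ∀ i ∈ range m, Tendsto (fun N : ℕ => f (N + i)) atTop (𝓝 0) := by
      intro i _
      have t1 : Tendsto (fun N : ℕ => ((N:ℝ)) + ((i:ℝ) - a)) atTop atTop :=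
        tendsto_atTop_add_const_right _ _ tendsto_natCast_atTop_atTop
      have t2 : Tendsto (fun N : ℕ => (((N + i : ℕ):ℝ) - a)) atTop atTop := by
        have : (fun N : ℕ => (((N + i : ℕ):ℝ) - a)) = fun N : ℕ => ((N:ℝ)) + ((i:ℝ) - a) := by
          funext N; push_cast; ring
        rw [this]; exact t1
      have t3 := t2.inv_tendsto_atTop
      have : (fun N : ℕ => f (N + i)) = fun N : ℕ => ((((N + i : ℕ):ℝ) - a))⁻¹ := by
        funext N; simp only [hfdef, one_div]
      rw [this]; exact t3
    have := tendsto_finset_sum (range m) hterm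
    simpa using this
  have hfin : ∑ k ∈ range m, f k = -(1/a) := by
    have := telesum n hn
    simp only [hfdef, hmdef, ha]
    exact this
  have hu : HasSum u (-(1/a)) := by
    rw [husum.hasSum_iff_tendsto_nat]
    have heq : (fun N : ℕ => ∑ k ∈ range N, u k)
        = fun N => (∑ k ∈ range m, f k) - ∑ i ∈ range m, f (N + i) := funext hpartial
    rw [heq, hfin]
    simpa using tendsto_const_nhds.sub hlim0
  -- final combination
  have hfinal : HasSum (fun k => (1/4) * (p k + q k) + (1/(4*a)) * u k)
      ((1/4) * ((π^2/2 + ∑ i ∈ range n, p i) + (π^2/2 - ∑ i ∈ range (n-1), g i))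
        + (1/(4*a)) * (-(1/a))) :=
    ((hp.add hq).mul_left _).add (hu.mul_left _)
  have hfunc : (fun k => (1/4) * (p k + q k) + (1/(4*a)) * u k)
      = fun k : ℕ => (k:ℝ)^2 / ((k:ℝ)^2 - a^2)^2 := by
    funext k
    have h1 := hsub k
    have h2 := (hadd k).ne'
    have h3 : (k:ℝ)^2 - a^2 ≠ 0 := by
      have : (k:ℝ)^2 - a^2 = ((k:ℝ)-a)*((k:ℝ)+a) := by ring
      rw [this]
      exact mul_ne_zero h1 h2
    rw [hu_eq]
    simp only [hpdef, hqdef]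
    field_simp
    ring
  have hval : (1/4) * ((π^2/2 + ∑ i ∈ range n, p i) + (π^2/2 - ∑ i ∈ range (n-1), g i))
        + (1/(4*a)) * (-(1/a)) = π^2/4 := by
    rw [hApB]
    field_simp
    ring
  rw [hfunc, hval] at hfinal
  exact hfinal.tsum_eq
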